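/- Let ι = (i_1,…,i_N) be a reduced word for the longest element w_0 of S_{n+1}, let c ∈ (ℂ^×)^N and set g = Θ_ι(c); fix i ∈ {1,…,n} with g_{i+1,i} ≠ 0 and α ∈ ℂ^×. Define ε_i(g) = g_{i+1,i+1}/g_{i+1,i}, φ_i(g) = (g_{i,i}/g_{i+1,i+1})·ε_i(g), and e_i^α(g) = x_i((α−1)φ_i(g)) · g · x_i((α^{-1}−1)ε_i(g)). Then for every j ∈ {1,…,n}: Δ_{w_0Λ_j,s_jΛ_j}(e_i^α(g)) = Δ_{w_0Λ_j,s_jΛ_j}(g) + δ_{ij}(α^{-1}−1)ε_i(g) and Δ_{w_0Λ_j,Λ_j}(e_i^α(g)) = Δ_{w_0Λ_j,Λ_j}(g) = 1. Consequently, Φ^{(+)}(e_i^α(g)) = Φ^{(+)}(g) + (α^{-1}−1)ε_i(g), where Φ^{(+)}(g) = ∑_{j=1}^n Δ_{w_0Λ_j,s_jΛ_j}(g). -/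

import Mathlib

/-!
STATEMENT 11: With g = Θ_ι(c) for a reduced word ι of w_0 ∈ S_{n+1}, i with
g_{i+1,i} ≠ 0 and α ∈ ℂ^×, setting ε_i(g) = g_{i+1,i+1}/g_{i+1,i},
φ_i(g) = (g_{i,i}/g_{i+1,i+1})·ε_i(g) and
e_i^α(g) = x_i((α−1)φ_i(g)) · g · x_i((α⁻¹−1)ε_i(g)):
Δ_{w_0Λ_j,s_jΛ_j}(e_i^α(g)) = Δ_{w_0Λ_j,s_jΛ_j}(g) + δ_{ij}(α⁻¹−1)ε_i(g),
Δ_{w_0Λ_j,Λ_j}(e_i^α(g)) = Δ_{w_0Λ_j,Λ_j}(g) = 1, and consequently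
Φ^{(+)}(e_i^α(g)) = Φ^{(+)}(g) + (α⁻¹−1)ε_i(g).
-/

/-- `y_i(t) = I + t E_{i+1,i}` in `SL_{n+1}(ℂ)` (rows and columns of matrices are
indexed by `Fin (n+1)`; the letter `i` ranges over `0,…,n-1`, corresponding to
the 1-based index `i+1 ∈ {1,…,n}`). Junk value `I` for `i ≥ n`. -/
noncomputable def ymat (n : ℕ) (i : ℕ) (t : ℂ) : Matrix (Fin (n + 1)) (Fin (n + 1)) ℂ :=
  if h : i < n then 1 + Matrix.single ⟨i + 1, by omega⟩ ⟨i, by omega⟩ t else 1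

/-- `x_i(t) = I + t E_{i,i+1}`. Junk value `I` for `i ≥ n`. -/
noncomputable def xmat (n : ℕ) (i : ℕ) (t : ℂ) : Matrix (Fin (n + 1)) (Fin (n + 1)) ℂ :=
  if h : i < n then 1 + Matrix.single ⟨i, by omega⟩ ⟨i + 1, by omega⟩ t else 1

/-- `α_i^∨(s)`: the diagonal matrix with `s` at position `i`, `s⁻¹` at position
`i+1`, and `1` elsewhere. -/
noncomputable def avmat (n : ℕ) (i : ℕ) (s : ℂ) : Matrix (Fin (n + 1)) (Fin (n + 1)) ℂ :=
  Matrix.diagonal (fun j => if (j : ℕ) = i then s else if (j : ℕ) = i + 1 then s⁻¹ else 1)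

/-- `s̄_i = x_i(−1) y_i(1) x_i(−1)`. -/
noncomputable def sbar (n : ℕ) (i : ℕ) : Matrix (Fin (n + 1)) (Fin (n + 1)) ℂ :=
  xmat n i (-1) * ymat n i 1 * xmat n i (-1)

/-- `Θ_ι(c) = y_{i_1}(c_1) α_{i_1}^∨(c_1⁻¹) ⋯ y_{i_k}(c_k) α_{i_k}^∨(c_k⁻¹)`. -/
noncomputable def theta (n : ℕ) {k : ℕ} (ι : Fin k → ℕ) (c : Fin k → ℂ) :
    Matrix (Fin (n + 1)) (Fin (n + 1)) ℂ :=
  (List.ofFn (fun m => ymat n (ι m) (c m) * avmat n (ι m) (c m)⁻¹)).prod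

/-- `w̄ = s̄_{i_1} ⋯ s̄_{i_k}` for a word `ι`. -/
noncomputable def wbar (n : ℕ) {k : ℕ} (ι : Fin k → ℕ) : Matrix (Fin (n + 1)) (Fin (n + 1)) ℂ :=
  (List.ofFn (fun m => sbar n (ι m))).prod

/-- The determinant of the upper-left `i×i` submatrix of `M` (junk value `0` if
`i > n+1`). -/
noncomputable def ulMinor {n : ℕ} (M : Matrix (Fin (n + 1)) (Fin (n + 1)) ℂ) (i : ℕ) : ℂ :=
  if h : i ≤ n + 1 then
    (M.submatrix (Fin.castLE h) (Fin.castLE h) : Matrix (Fin i) (Fin i) ℂ).det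
  else 0

/-- The adjacent transposition `s_i = (i, i+1)` of `S_{n+1}` (1-based
`(i+1, i+2)`); junk value `1` for `i ≥ n`. -/
noncomputable def sperm (n : ℕ) (i : ℕ) : Equiv.Perm (Fin (n + 1)) :=
  if h : i < n then Equiv.swap ⟨i, by omega⟩ ⟨i + 1, by omega⟩ else 1


/-! ### infrastructure -/

open Matrix

variable {n : ℕ}

/-- upper unitriangular -/
def UpperUni {m : ℕ} (M : Matrix (Fin m) (Fin m) ℂ) : Prop :=
  (∀ k, M k k = 1) ∧ ∀ ⦃k l⦄, l < k → M k l = 0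

def LowerUni {m : ℕ} (M : Matrix (Fin m) (Fin m) ℂ) : Prop :=
  (∀ k, M k k = 1) ∧ ∀ ⦃k l⦄, k < l → M k l = 0

lemma upperUni_one {m : ℕ} : UpperUni (1 : Matrix (Fin m) (Fin m) ℂ) :=
  ⟨fun k => Matrix.one_apply_eq k, fun _ _ h => Matrix.one_apply_ne (Ne.symm (ne_of_lt h))⟩

lemma UpperUni.mul {m : ℕ} {A B : Matrix (Fin m) (Fin m) ℂ} (hA : UpperUni A) (hB : UpperUni B) :
    UpperUni (A * B) := by
  constructor
  · intro k
    rw [Matrix.mul_apply]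
    rw [Finset.sum_eq_single k]
    · rw [hA.1, hB.1, one_mul]
    · intro p _ hp
      rcases lt_or_gt_of_ne hp with h | h
      · rw [hA.2 h, zero_mul]
      · rw [hB.2 h, mul_zero]
    · simp
  · intro k l h
    rw [Matrix.mul_apply]
    apply Finset.sum_eq_zero
    intro p _
    rcases lt_or_ge p k with hp | hp
    · rw [hA.2 hp, zero_mul]
    · rw [hB.2 (lt_of_lt_of_le h hp), mul_zero]

lemma UpperUni.det_eq_one {m : ℕ} {A : Matrix (Fin m) (Fin m) ℂ} (hA : UpperUni A) :
    A.det = 1 := by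
  have hdet := Matrix.det_of_upperTriangular (M := A) (fun k l h => hA.2 h)
  rw [hdet]
  simp [hA.1]

lemma LowerUni.det_eq_one {m : ℕ} {A : Matrix (Fin m) (Fin m) ℂ} (hA : LowerUni A) :
    A.det = 1 := by
  have hdet := Matrix.det_of_lowerTriangular A (fun k l h => hA.2 h)
  rw [hdet]
  simp [hA.1]

lemma LowerUni.sub {L : Matrix (Fin (n+1)) (Fin (n+1)) ℂ} (hL : LowerUni L)
    {j : ℕ} (h : j ≤ n + 1) :
    LowerUni (L.submatrix (Fin.castLE h) (Fin.castLE h)) := by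
  refine ⟨fun k => hL.1 _, fun k l hkl => hL.2 ?_⟩
  rw [Fin.lt_def] at hkl ⊢
  simpa using hkl

lemma UpperUni.sub {L : Matrix (Fin (n+1)) (Fin (n+1)) ℂ} (hL : UpperUni L)
    {j : ℕ} (h : j ≤ n + 1) :
    UpperUni (L.submatrix (Fin.castLE h) (Fin.castLE h)) := by
  refine ⟨fun k => hL.1 _, fun k l hkl => hL.2 ?_⟩
  rw [Fin.lt_def] at hkl ⊢
  simpa using hkl

/-- block of product with lower-unitriangular on the left -/
lemma submatrix_mul_lowerUni {L M : Matrix (Fin (n+1)) (Fin (n+1)) ℂ} (hL : LowerUni L)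
    {j : ℕ} (h : j ≤ n + 1) :
    (L * M).submatrix (Fin.castLE h) (Fin.castLE h)
      = L.submatrix (Fin.castLE h) (Fin.castLE h) * M.submatrix (Fin.castLE h) (Fin.castLE h) := by
  ext k l
  rw [Matrix.submatrix_apply, Matrix.mul_apply, Matrix.mul_apply]
  have : ∑ p : Fin j, L.submatrix (Fin.castLE h) (Fin.castLE h) k p *
      M.submatrix (Fin.castLE h) (Fin.castLE h) p l
      = ∑ p ∈ Finset.univ.map (Fin.castLEEmb h),
          L (Fin.castLE h k) p * M p (Fin.castLE h l) := by
    rw [Finset.sum_map]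
    rfl
  rw [this]
  refine (Finset.sum_subset (Finset.subset_univ _) ?_).symm
  intro p _ hp
  have hpj : ¬ (p : ℕ) < j := by
    intro hlt
    refine hp ?_
    rw [Finset.mem_map]
    exact ⟨⟨(p : ℕ), hlt⟩, Finset.mem_univ _, Fin.ext rfl⟩
  have : (Fin.castLE h k) < p := by
    rw [Fin.lt_def]
    simp only [Fin.coe_castLE]
    omega
  rw [hL.2 this, zero_mul]

/-- block of product with upper-unitriangular on the right -/
lemma submatrix_mul_upperUni {M U : Matrix (Fin (n+1)) (Fin (n+1)) ℂ} (hU : UpperUni U)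
    {j : ℕ} (h : j ≤ n + 1) :
    (M * U).submatrix (Fin.castLE h) (Fin.castLE h)
      = M.submatrix (Fin.castLE h) (Fin.castLE h) * U.submatrix (Fin.castLE h) (Fin.castLE h) := by
  ext k l
  rw [Matrix.submatrix_apply, Matrix.mul_apply, Matrix.mul_apply]
  have : ∑ p : Fin j, M.submatrix (Fin.castLE h) (Fin.castLE h) k p *
      U.submatrix (Fin.castLE h) (Fin.castLE h) p l
      = ∑ p ∈ Finset.univ.map (Fin.castLEEmb h),
          M (Fin.castLE h k) p * U p (Fin.castLE h l) := by
    rw [Finset.sum_map]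
    rfl
  rw [this]
  refine (Finset.sum_subset (Finset.subset_univ _) ?_).symm
  intro p _ hp
  have hpj : ¬ (p : ℕ) < j := by
    intro hlt
    refine hp ?_
    rw [Finset.mem_map]
    exact ⟨⟨(p : ℕ), hlt⟩, Finset.mem_univ _, Fin.ext rfl⟩
  have : (Fin.castLE h l) < p := by
    rw [Fin.lt_def]
    simp only [Fin.coe_castLE]
    omega
  rw [hU.2 this, mul_zero]


lemma ulMinor_mul_lowerUni {L M : Matrix (Fin (n+1)) (Fin (n+1)) ℂ} (hL : LowerUni L) (j : ℕ) :
    ulMinor (L * M) j = ulMinor M j := by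
  unfold ulMinor
  split_ifs with h
  · rw [submatrix_mul_lowerUni hL h, Matrix.det_mul, (hL.sub h).det_eq_one, one_mul]
  · rfl

lemma ulMinor_mul_upperUni {M U : Matrix (Fin (n+1)) (Fin (n+1)) ℂ} (hU : UpperUni U) (j : ℕ) :
    ulMinor (M * U) j = ulMinor M j := by
  unfold ulMinor
  split_ifs with h
  · rw [submatrix_mul_upperUni hU h, Matrix.det_mul, (hU.sub h).det_eq_one, mul_one]
  · rfl

lemma ulMinor_upperUni {U : Matrix (Fin (n+1)) (Fin (n+1)) ℂ} (hU : UpperUni U) (j : ℕ) :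
    ulMinor U j = if j ≤ n + 1 then 1 else 0 := by
  unfold ulMinor
  split_ifs with h
  · exact (hU.sub h).det_eq_one
  · rfl

/-! ### signed permutation matrices -/

noncomputable def spMat (σ : Equiv.Perm (Fin (n+1))) (d : Fin (n+1) → ℂ) :
    Matrix (Fin (n+1)) (Fin (n+1)) ℂ :=
  Matrix.of fun k l => if k = σ l then d l else 0

lemma spMat_apply (σ : Equiv.Perm (Fin (n+1))) (d : Fin (n+1) → ℂ) (k l) :
    spMat σ d k l = if k = σ l then d l else 0 := rfl

lemma perm_inv_apply_self (σ : Equiv.Perm (Fin (n+1))) (x : Fin (n+1)) : σ⁻¹ (σ x) = x := by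
  simp

lemma spMat_one : spMat (1 : Equiv.Perm (Fin (n+1))) (fun _ => 1) = 1 := by
  ext k l
  rw [spMat_apply, Matrix.one_apply]
  simp [eq_comm]
  split_ifs with h <;> simp [h]

lemma spMat_mul (σ τ : Equiv.Perm (Fin (n+1))) (d e : Fin (n+1) → ℂ) :
    spMat σ d * spMat τ e = spMat (σ * τ) (fun l => d (τ l) * e l) := by
  ext k l
  rw [Matrix.mul_apply, spMat_apply]
  rw [Finset.sum_eq_single (τ l)]
  · rw [spMat_apply, spMat_apply]
    simp [Equiv.Perm.mul_apply, mul_comm]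
  · intro p _ hp
    rw [spMat_apply σ d, spMat_apply τ e, if_neg hp, mul_zero]
  · simp

lemma spMat_mul_inv (σ : Equiv.Perm (Fin (n+1))) (d : Fin (n+1) → ℂ) (hd : ∀ l, d l ≠ 0) :
    spMat σ d * spMat σ⁻¹ (fun l => (d (σ⁻¹ l))⁻¹) = 1 := by
  rw [spMat_mul]
  rw [mul_inv_cancel]
  have : (fun l => d (σ⁻¹ l) * (d (σ⁻¹ l))⁻¹) = fun _ => (1:ℂ) := by
    funext l
    exact mul_inv_cancel₀ (hd _)
  rw [this, spMat_one]

lemma spMat_inv_mul (σ : Equiv.Perm (Fin (n+1))) (d : Fin (n+1) → ℂ) (hd : ∀ l, d l ≠ 0) :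
    spMat σ⁻¹ (fun l => (d (σ⁻¹ l))⁻¹) * spMat σ d = 1 := by
  rw [spMat_mul]
  rw [inv_mul_cancel]
  have : (fun l => (d (σ⁻¹ (σ l)))⁻¹ * d l) = fun _ => (1:ℂ) := by
    funext l
    rw [perm_inv_apply_self]
    exact inv_mul_cancel₀ (hd _)
  rw [this, spMat_one]

/-- conjugation: the matrix `X` with `X * spMat σ d = spMat σ d * u`. -/
noncomputable def spConjL (σ : Equiv.Perm (Fin (n+1))) (d : Fin (n+1) → ℂ)
    (u : Matrix (Fin (n+1)) (Fin (n+1)) ℂ) : Matrix (Fin (n+1)) (Fin (n+1)) ℂ :=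
  Matrix.of fun k m => d (σ⁻¹ k) * (d (σ⁻¹ m))⁻¹ * u (σ⁻¹ k) (σ⁻¹ m)

lemma spConjL_mul (σ : Equiv.Perm (Fin (n+1))) (d : Fin (n+1) → ℂ) (hd : ∀ l, d l ≠ 0)
    (u : Matrix (Fin (n+1)) (Fin (n+1)) ℂ) :
    spConjL σ d u * spMat σ d = spMat σ d * u := by
  ext k l
  rw [Matrix.mul_apply, Matrix.mul_apply]
  rw [Finset.sum_eq_single (σ l)]
  · rw [Finset.sum_eq_single (σ⁻¹ k)]
    · show d (σ⁻¹ k) * (d (σ⁻¹ (σ l)))⁻¹ * u (σ⁻¹ k) (σ⁻¹ (σ l)) * spMat σ d (σ l) l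
        = spMat σ d k (σ⁻¹ k) * u (σ⁻¹ k) l
      rw [spMat_apply, spMat_apply, if_pos rfl, if_pos (by simp), perm_inv_apply_self]
      have h1 : (d l) ≠ 0 := hd l
      field_simp
    · intro p _ hp
      rw [spMat_apply, if_neg (by
        intro hh
        exact hp (by rw [hh, perm_inv_apply_self])), zero_mul]
    · simp
  · intro p _ hp
    rw [spMat_apply, if_neg (fun hh => hp (by simp [hh])), mul_zero]
  · simp

lemma upperUni_spConjL (σ : Equiv.Perm (Fin (n+1))) (d : Fin (n+1) → ℂ) (hd : ∀ l, d l ≠ 0)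
    (u : Matrix (Fin (n+1)) (Fin (n+1)) ℂ) (hdiag : ∀ k, u k k = 1)
    (hcond : ∀ k m, m < k → u (σ⁻¹ k) (σ⁻¹ m) = 0) : UpperUni (spConjL σ d u) := by
  constructor
  · intro k
    show d (σ⁻¹ k) * (d (σ⁻¹ k))⁻¹ * u (σ⁻¹ k) (σ⁻¹ k) = 1
    rw [hdiag, mul_inv_cancel₀ (hd _), mul_one]
  · intro k m h
    show d (σ⁻¹ k) * (d (σ⁻¹ m))⁻¹ * u (σ⁻¹ k) (σ⁻¹ m) = 0
    rw [hcond k m h, mul_zero]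

lemma lowerUni_spConjL (σ : Equiv.Perm (Fin (n+1))) (d : Fin (n+1) → ℂ) (hd : ∀ l, d l ≠ 0)
    (u : Matrix (Fin (n+1)) (Fin (n+1)) ℂ) (hdiag : ∀ k, u k k = 1)
    (hcond : ∀ k m, k < m → u (σ⁻¹ k) (σ⁻¹ m) = 0) : LowerUni (spConjL σ d u) := by
  constructor
  · intro k
    show d (σ⁻¹ k) * (d (σ⁻¹ k))⁻¹ * u (σ⁻¹ k) (σ⁻¹ k) = 1
    rw [hdiag, mul_inv_cancel₀ (hd _), mul_one]
  · intro k m h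
    show d (σ⁻¹ k) * (d (σ⁻¹ m))⁻¹ * u (σ⁻¹ k) (σ⁻¹ m) = 0
    rw [hcond k m h, mul_zero]

/-! ### entrywise helpers -/

lemma std_mul_apply {m : ℕ} (a b : Fin m) (t : ℂ) (M : Matrix (Fin m) (Fin m) ℂ) (k l : Fin m) :
    (Matrix.single a b t * M) k l = if k = a then t * M b l else 0 := by
  by_cases h : k = a
  · subst h
    rw [Matrix.single_mul_apply_same, if_pos rfl]
  · rw [if_neg h, Matrix.mul_apply]
    apply Finset.sum_eq_zero
    intro p _
    rw [Matrix.single_apply_of_row_ne (fun hh => h hh.symm), zero_mul]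

lemma mul_std_apply {m : ℕ} (a b : Fin m) (t : ℂ) (M : Matrix (Fin m) (Fin m) ℂ) (k l : Fin m) :
    (M * Matrix.single a b t) k l = if l = b then M k a * t else 0 := by
  by_cases h : l = b
  · subst h
    rw [Matrix.mul_single_apply_same, if_pos rfl]
  · rw [if_neg h, Matrix.mul_apply]
    apply Finset.sum_eq_zero
    intro p _
    rw [Matrix.single_apply_of_col_ne _ _ (fun hh => h hh.symm), mul_zero]

lemma xmat_of_lt (i : ℕ) (h : i < n) (t : ℂ) :
    xmat n i t = 1 + Matrix.single ⟨i, by omega⟩ ⟨i+1, by omega⟩ t := by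
  rw [xmat, dif_pos h]

lemma ymat_of_lt (i : ℕ) (h : i < n) (t : ℂ) :
    ymat n i t = 1 + Matrix.single ⟨i+1, by omega⟩ ⟨i, by omega⟩ t := by
  rw [ymat, dif_pos h]

lemma xmat_mul_apply (i : ℕ) (h : i < n) (t : ℂ) (M : Matrix (Fin (n+1)) (Fin (n+1)) ℂ)
    (k l : Fin (n+1)) :
    (xmat n i t * M) k l
      = M k l + (if k = (⟨i, by omega⟩ : Fin (n+1)) then t * M ⟨i+1, by omega⟩ l else 0) := by
  rw [xmat_of_lt i h, Matrix.add_mul, Matrix.one_mul, Matrix.add_apply, std_mul_apply]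

lemma mul_xmat_apply (i : ℕ) (h : i < n) (t : ℂ) (M : Matrix (Fin (n+1)) (Fin (n+1)) ℂ)
    (k l : Fin (n+1)) :
    (M * xmat n i t) k l
      = M k l + (if l = (⟨i+1, by omega⟩ : Fin (n+1)) then M k ⟨i, by omega⟩ * t else 0) := by
  rw [xmat_of_lt i h, Matrix.mul_add, Matrix.mul_one, Matrix.add_apply, mul_std_apply]

lemma mul_ymat_apply (i : ℕ) (h : i < n) (t : ℂ) (M : Matrix (Fin (n+1)) (Fin (n+1)) ℂ)
    (k l : Fin (n+1)) :
    (M * ymat n i t) k l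
      = M k l + (if l = (⟨i, by omega⟩ : Fin (n+1)) then M k ⟨i+1, by omega⟩ * t else 0) := by
  rw [ymat_of_lt i h, Matrix.mul_add, Matrix.mul_one, Matrix.add_apply, mul_std_apply]

lemma upperUni_xmat (i : ℕ) (t : ℂ) : UpperUni (xmat n i t) := by
  unfold xmat
  split_ifs with h
  · constructor
    · intro k
      rw [Matrix.add_apply, Matrix.one_apply_eq]
      rw [Matrix.single_apply_of_ne, add_zero]
      intro ⟨h1, h2⟩
      rw [← h1] at h2
      simp [Fin.ext_iff] at h2
    · intro k l hlk
      rw [Matrix.add_apply, Matrix.one_apply_ne (Ne.symm (ne_of_lt hlk))]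
      rw [Matrix.single_apply_of_ne, add_zero]
      intro ⟨h1, h2⟩
      rw [← h1, ← h2] at hlk
      simp [Fin.lt_def] at hlk
  · exact upperUni_one

/-- the sign function of `sbar`. -/
noncomputable def sbarSign (i : ℕ) : Fin (n+1) → ℂ := fun l => if (l : ℕ) = i + 1 then -1 else 1

lemma sbarSign_ne_zero (i : ℕ) (l : Fin (n+1)) : sbarSign i l ≠ 0 := by
  unfold sbarSign
  split_ifs <;> norm_num

lemma sbar_eq (i : ℕ) (h : i < n) :
    sbar n i = spMat (sperm n i) (sbarSign i) := by
  have hA : sbar n i = 1 + Matrix.single ⟨i, by omega⟩ (⟨i+1, by omega⟩ : Fin (n+1)) (-1)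
      + Matrix.single ⟨i+1, by omega⟩ (⟨i, by omega⟩ : Fin (n+1)) 1
      + Matrix.single ⟨i, by omega⟩ (⟨i, by omega⟩ : Fin (n+1)) (-1)
      + Matrix.single ⟨i+1, by omega⟩ (⟨i+1, by omega⟩ : Fin (n+1)) (-1) := by
    rw [sbar, xmat_of_lt i h, ymat_of_lt i h]
    set A := Matrix.single (⟨i, by omega⟩ : Fin (n+1)) (⟨i+1, by omega⟩ : Fin (n+1)) (-1:ℂ)
    set B := Matrix.single (⟨i+1, by omega⟩ : Fin (n+1)) (⟨i, by omega⟩ : Fin (n+1)) (1:ℂ)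
    have hAB : A * B = Matrix.single ⟨i, by omega⟩ (⟨i, by omega⟩ : Fin (n+1)) (-1) := by
      rw [Matrix.single_mul_single_same]; norm_num
    have hBA : B * A = Matrix.single ⟨i+1, by omega⟩ (⟨i+1, by omega⟩ : Fin (n+1)) (-1) := by
      rw [Matrix.single_mul_single_same]; norm_num
    have hAA : A * A = 0 := by
      apply Matrix.single_mul_single_of_ne
      simp [Fin.ext_iff]
    have hstdneg : ∀ (a b : Fin (n+1)) (t : ℂ),
        -Matrix.single a b t = Matrix.single a b (-t) := by
      intro a b t
      ext k l
      rw [Matrix.neg_apply]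
      unfold Matrix.single
      simp only [Matrix.of_apply]
      split_ifs <;> simp
    have hABA : A * B * A = -A := by
      rw [hAB, Matrix.single_mul_single_same, hstdneg]
      norm_num
    have expand : (1 + A) * (1 + B) * (1 + A)
        = 1 + A + B + B * A + A + A * A + A * B + A * B * A := by noncomm_ring
    rw [expand, hAA, hABA, hAB, hBA]
    abel
  rw [hA]
  ext k l
  rw [spMat_apply]
  unfold sperm sbarSign
  rw [dif_pos h]
  rw [Matrix.add_apply, Matrix.add_apply, Matrix.add_apply, Matrix.add_apply, Matrix.one_apply]
  unfold Matrix.single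
  rw [Equiv.swap_apply_def]
  simp only [Matrix.of_apply, Fin.ext_iff]
  have hv1 : ((⟨i, by omega⟩ : Fin (n+1)) : ℕ) = i := rfl
  have hv2 : ((⟨i+1, by omega⟩ : Fin (n+1)) : ℕ) = i + 1 := rfl
  clear hA
  split_ifs <;> first | (exfalso; omega) | norm_num

/-! ### inversion counting -/

noncomputable def invc (σ : Equiv.Perm (Fin (n+1))) : ℕ :=
  (Finset.univ.filter
    (fun p : Fin (n+1) × Fin (n+1) => p.1 < p.2 ∧ σ p.2 < σ p.1)).card

lemma invc_one : invc (1 : Equiv.Perm (Fin (n+1))) = 0 := by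
  unfold invc
  rw [Finset.card_eq_zero, Finset.filter_eq_empty_iff]
  rintro p _ ⟨h1, h2⟩
  simp only [Equiv.Perm.one_apply] at h2
  exact absurd h1 (not_lt.mpr (le_of_lt h2))

lemma invc_rev : invc (Fin.revPerm : Equiv.Perm (Fin (n+1))) * 2 = n * (n + 1) := by
  unfold invc
  have hset : (Finset.univ.filter
      (fun p : Fin (n+1) × Fin (n+1) => p.1 < p.2 ∧ Fin.revPerm p.2 < Fin.revPerm p.1))
      = Finset.univ.filter (fun p : Fin (n+1) × Fin (n+1) => p.1 < p.2) := by
    apply Finset.filter_congr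
    intro p _
    simp [Fin.rev_lt_rev, and_self]
  rw [hset, Finset.card_filter]
  rw [Fintype.sum_prod_type_right]
  have hinner : ∀ q : Fin (n+1), (∑ p : Fin (n+1), if (p, q).1 < (p, q).2 then 1 else 0) = (q:ℕ) := by
    intro q
    rw [← Finset.card_filter]
    have : Finset.univ.filter (fun p : Fin (n+1) => p < q) = Finset.Iio q := by
      ext p
      simp
    rw [this, Fin.card_Iio]
  rw [Finset.sum_congr rfl (fun q _ => hinner q)]
  rw [Fin.sum_univ_eq_sum_range (fun q => q)]
  rw [Finset.sum_range_id_mul_two (n+1), Nat.add_sub_cancel, Nat.mul_comm]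

/-- a "sorted" adjacent swap sends sorted pairs other than `(x,y)` to sorted pairs -/
lemma swap_adj_lt {x y : Fin (n+1)} (hxy : (x:ℕ) + 1 = (y:ℕ)) {p q : Fin (n+1)}
    (hpq : p < q) (hne : ¬(p = x ∧ q = y)) :
    Equiv.swap x y p < Equiv.swap x y q := by
  rw [Equiv.swap_apply_def, Equiv.swap_apply_def]
  rw [Fin.lt_def] at hpq ⊢
  simp only [Fin.ext_iff] at hne ⊢
  split_ifs <;> omega

lemma invc_mul_swap_of_lt {σ : Equiv.Perm (Fin (n+1))} {x y : Fin (n+1)}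
    (hxy : (x:ℕ) + 1 = (y:ℕ)) (hlt : σ x < σ y) :
    invc (σ * Equiv.swap x y) = invc σ + 1 := by
  classical
  set s := Equiv.swap x y with hs
  set σ' := σ * s with hσ'
  have hsx : s x = y := Equiv.swap_apply_left x y
  have hsy : s y = x := Equiv.swap_apply_right x y
  have hxyne : x ≠ y := by
    intro h; rw [h] at hxy; omega
  have hxylt : x < y := by rw [Fin.lt_def]; omega
  set S : Equiv.Perm (Fin (n+1)) → Finset (Fin (n+1) × Fin (n+1)) :=
    fun τ => Finset.univ.filter (fun p => p.1 < p.2 ∧ τ p.2 < τ p.1) with hS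
  have hmemS : ∀ τ p, p ∈ S τ ↔ (p.1 < p.2 ∧ τ p.2 < τ p.1) := by
    intro τ p
    rw [hS]
    simp
  -- (x,y) ∈ S σ' but not in S σ
  have hmem1 : (x, y) ∈ S σ' := by
    rw [hmemS]
    refine ⟨hxylt, ?_⟩
    show σ (s y) < σ (s x)
    rw [hsx, hsy]
    exact hlt
  have hmem2 : (x, y) ∉ S σ := by
    rw [hmemS]
    rintro ⟨-, h2⟩
    exact absurd hlt (not_lt.mpr (le_of_lt h2))
  -- bijection between the erased sets
  have hcard : ((S σ').erase (x, y)).card = ((S σ).erase (x, y)).card := by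
    apply Finset.card_bij' (fun p _ => (s p.1, s p.2)) (fun p _ => (s p.1, s p.2))
    · -- maps into target
      intro p hp
      rw [Finset.mem_erase, hmemS] at hp
      obtain ⟨hpxy, hp1, hp2⟩ := hp
      rw [Finset.mem_erase, hmemS]
      have hlt1 : s p.1 < s p.2 := by
        apply swap_adj_lt hxy hp1
        rintro ⟨h1, h2⟩
        exact hpxy (by rw [Prod.ext_iff]; exact ⟨h1, h2⟩)
      refine ⟨?_, hlt1, ?_⟩
      · intro hcontra
        rw [Prod.ext_iff] at hcontra
        obtain ⟨h1, h2⟩ := hcontra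
        simp only at h1 h2
        have : p.1 = s x := by rw [← h1, Equiv.swap_apply_self]
        have hh2 : p.2 = s y := by rw [← h2, Equiv.swap_apply_self]
        rw [hsx] at this
        rw [hsy] at hh2
        rw [this, hh2] at hp1
        exact absurd hp1 (not_lt.mpr (le_of_lt hxylt))
      · show σ (s p.2) < σ (s p.1)
        exact hp2
    · intro p hp
      rw [Finset.mem_erase, hmemS] at hp
      obtain ⟨hpxy, hp1, hp2⟩ := hp
      rw [Finset.mem_erase, hmemS]
      have hlt1 : s p.1 < s p.2 := by
        apply swap_adj_lt hxy hp1
        rintro ⟨h1, h2⟩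
        exact hpxy (by rw [Prod.ext_iff]; exact ⟨h1, h2⟩)
      refine ⟨?_, hlt1, ?_⟩
      · intro hcontra
        rw [Prod.ext_iff] at hcontra
        obtain ⟨h1, h2⟩ := hcontra
        simp only at h1 h2
        have h1' : p.1 = s x := by rw [← h1, Equiv.swap_apply_self]
        have h2' : p.2 = s y := by rw [← h2, Equiv.swap_apply_self]
        rw [hsx] at h1'
        rw [hsy] at h2'
        rw [h1', h2'] at hp1
        exact absurd hp1 (not_lt.mpr (le_of_lt hxylt))
      · show σ' (s p.2) < σ' (s p.1)
        show σ (s (s p.2)) < σ (s (s p.1))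
        rw [Equiv.swap_apply_self, Equiv.swap_apply_self]
        exact hp2
    · intro p _
      show (s (s p.1), s (s p.2)) = p
      rw [hs]
      simp [Equiv.swap_apply_self]
    · intro p _
      show (s (s p.1), s (s p.2)) = p
      rw [hs]
      simp [Equiv.swap_apply_self]
  have e1 : (S σ').card = ((S σ').erase (x,y)).card + 1 := by
    rw [Finset.card_erase_of_mem hmem1]
    have : 0 < (S σ').card := Finset.card_pos.mpr ⟨(x,y), hmem1⟩
    omega
  have e2 : ((S σ).erase (x,y)).card = (S σ).card := by
    rw [Finset.erase_eq_of_notMem hmem2]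
  show (S σ').card = (S σ).card + 1
  omega

lemma invc_mul_swap_of_gt {σ : Equiv.Perm (Fin (n+1))} {x y : Fin (n+1)}
    (hxy : (x:ℕ) + 1 = (y:ℕ)) (hgt : σ y < σ x) :
    invc σ = invc (σ * Equiv.swap x y) + 1 := by
  have h1 : (σ * Equiv.swap x y) x < (σ * Equiv.swap x y) y := by
    show σ (Equiv.swap x y x) < σ (Equiv.swap x y y)
    rw [Equiv.swap_apply_left, Equiv.swap_apply_right]
    exact hgt
  have := invc_mul_swap_of_lt (σ := σ * Equiv.swap x y) hxy h1
  rw [mul_assoc] at this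
  rw [Equiv.swap_mul_self, mul_one] at this
  exact this

/-! ### words -/

noncomputable def wordPerm (n : ℕ) (l : List ℕ) : Equiv.Perm (Fin (n+1)) :=
  (l.map (sperm n)).prod

noncomputable def wbarL (n : ℕ) (l : List ℕ) : Matrix (Fin (n+1)) (Fin (n+1)) ℂ :=
  (l.map (sbar n)).prod

noncomputable def thetaL (n : ℕ) (l : List (ℕ × ℂ)) : Matrix (Fin (n+1)) (Fin (n+1)) ℂ :=
  (l.map (fun p => ymat n p.1 p.2 * avmat n p.1 p.2⁻¹)).prod

lemma wordPerm_nil : wordPerm n [] = 1 := rfl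

lemma wordPerm_append (l₁ l₂ : List ℕ) :
    wordPerm n (l₁ ++ l₂) = wordPerm n l₁ * wordPerm n l₂ := by
  unfold wordPerm
  rw [List.map_append, List.prod_append]

lemma wordPerm_singleton (a : ℕ) : wordPerm n [a] = sperm n a := by
  unfold wordPerm
  simp

/-- the crucial consequence of reducedness: every prefix of the word is increasing
at the next letter. -/
lemma prefix_lt (L : List ℕ) (hall : ∀ a ∈ L, a < n)
    (hlen : L.length = n * (n+1) / 2)
    (hprod : wordPerm n L = (Fin.revPerm : Equiv.Perm (Fin (n+1)))) :
    ∀ l₁ a l₂, L = l₁ ++ a :: l₂ → ∀ (h : a < n),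
      wordPerm n l₁ ⟨a, by omega⟩ < wordPerm n l₁ ⟨a+1, by omega⟩ := by
  classical
  set f : ℕ → ℕ := fun m => invc (wordPerm n (L.take m)) with hf
  have hrev2 : invc (Fin.revPerm : Equiv.Perm (Fin (n+1))) * 2 = n * (n+1) := invc_rev
  have hN : f L.length = L.length := by
    rw [hf]
    simp only [List.take_length]
    rw [hprod]
    omega
  -- dichotomy step
  have hdich : ∀ (m : ℕ) (hm : m < L.length),
      (f (m+1) = f m + 1 ∧ wordPerm n (L.take m) ⟨L[m]'hm, by
          have := hall _ (L.getElem_mem hm); omega⟩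
        < wordPerm n (L.take m) ⟨L[m]'hm + 1, by
          have := hall _ (L.getElem_mem hm); omega⟩)
      ∨ f m = f (m+1) + 1 := by
    intro m hm
    have han : L[m]'hm < n := hall _ (L.getElem_mem hm)
    set a := L[m]'hm with ha
    set x : Fin (n+1) := ⟨a, by omega⟩ with hx
    set y : Fin (n+1) := ⟨a+1, by omega⟩ with hy
    have hxy : (x:ℕ) + 1 = (y:ℕ) := rfl
    have htake : L.take (m+1) = L.take m ++ [a] := by
      rw [List.take_add_one]
      congr 1
      rw [List.getElem?_eq_getElem hm]
      rfl
    have hwp : wordPerm n (L.take (m+1)) = wordPerm n (L.take m) * Equiv.swap x y := by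
      rw [htake, wordPerm_append, wordPerm_singleton, sperm, dif_pos han]
    set σ := wordPerm n (L.take m)
    have hne : σ x ≠ σ y := by
      intro hcontra
      have := σ.injective hcontra
      rw [hx, hy, Fin.ext_iff] at this
      simp at this
    rcases lt_or_gt_of_ne hne with hlt | hgt
    · left
      constructor
      · show invc (wordPerm n (L.take (m+1))) = invc σ + 1
        rw [hwp]
        exact invc_mul_swap_of_lt hxy hlt
      · exact hlt
    · right
      show invc σ = invc (wordPerm n (L.take (m+1))) + 1
      rw [hwp]
      exact invc_mul_swap_of_gt hxy hgt
  have hstep1 : ∀ m, f (m+1) ≤ f m + 1 := by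
    intro m
    by_cases hm : m < L.length
    · rcases hdich m hm with ⟨h1, -⟩ | h2
      · omega
      · omega
    · have h1 : L.take (m+1) = L := List.take_of_length_le (by omega)
      have h2 : L.take m = L := List.take_of_length_le (by omega)
      rw [hf]
      simp only [h1, h2]
      omega
  have hmono : ∀ m k, f (m + k) ≤ f m + k := by
    intro m k
    induction k with
    | zero => simp
    | succ k ih =>
        have heq : m + (k + 1) = (m + k) + 1 := by omega
        rw [heq]
        have := hstep1 (m + k)
        omega
  have hexact : ∀ m, m ≤ L.length → f m = m := by
    intro m hm
    have h1 : f m ≤ m := by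
      have := hmono 0 m
      have h0 : f 0 = 0 := by
        rw [hf]
        simp only [List.take_zero]
        rw [wordPerm_nil]
        exact invc_one
      simpa [h0] using this
    have h2 : f L.length ≤ f m + (L.length - m) := by
      have := hmono m (L.length - m)
      rwa [show m + (L.length - m) = L.length by omega] at this
    omega
  intro l₁ a l₂ hsplit h
  set m := l₁.length with hm
  have hmlt : m < L.length := by
    rw [hsplit]
    simp [hm]
  have htake1 : L.take m = l₁ := by
    rw [hsplit, hm, List.take_left]
  have hgetm : L[m]'(by omega) = a := by
    subst hsplit
    rw [List.getElem_append_right (by omega)]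
    simp [hm]
  rcases hdich m hmlt with ⟨-, hlt⟩ | h2
  · rw [htake1] at hlt
    convert hlt using 3 <;> rw [hgetm]
  · have e1 := hexact m (by omega)
    have e2 := hexact (m+1) (by omega)
    omega

/-! ### wbar as signed permutation matrix -/

lemma wbarL_nil : wbarL n [] = 1 := rfl

lemma wbarL_append (l₁ l₂ : List ℕ) :
    wbarL n (l₁ ++ l₂) = wbarL n l₁ * wbarL n l₂ := by
  unfold wbarL
  rw [List.map_append, List.prod_append]

lemma wbarL_singleton (a : ℕ) : wbarL n [a] = sbar n a := by
  unfold wbarL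
  simp

lemma thetaL_append (l₁ l₂ : List (ℕ × ℂ)) :
    thetaL n (l₁ ++ l₂) = thetaL n l₁ * thetaL n l₂ := by
  unfold thetaL
  rw [List.map_append, List.prod_append]

lemma thetaL_singleton (p : ℕ × ℂ) :
    thetaL n [p] = ymat n p.1 p.2 * avmat n p.1 p.2⁻¹ := by
  unfold thetaL
  simp

lemma wbar_spMat (l : List ℕ) (hall : ∀ a ∈ l, a < n) :
    ∃ d : Fin (n+1) → ℂ, (∀ k, d k ≠ 0) ∧ wbarL n l = spMat (wordPerm n l) d := by
  induction l with
  | nil =>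
      exact ⟨fun _ => 1, fun _ => one_ne_zero, by rw [wbarL_nil, wordPerm_nil, spMat_one]⟩
  | cons a l ih =>
      obtain ⟨d, hd, hW⟩ := ih (fun b hb => hall b (List.mem_cons_of_mem a hb))
      have ha : a < n := hall a (List.mem_cons_self)
      refine ⟨fun k => sbarSign a (wordPerm n l k) * d k, fun k => ?_, ?_⟩
      · exact mul_ne_zero (sbarSign_ne_zero a _) (hd k)
      · show wbarL n (a :: l) = _
        have : (a :: l) = [a] ++ l := rfl
        rw [this, wbarL_append, wbarL_singleton, wordPerm_append, wordPerm_singleton]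
        rw [sbar_eq a ha, hW, spMat_mul]

/-! ### xmat facts -/

lemma xmat_zero (i : ℕ) : xmat n i 0 = 1 := by
  unfold xmat
  split_ifs with h
  · rw [Matrix.single_zero, add_zero]
  · rfl

lemma xmat_mul_xmat (i : ℕ) (t s : ℂ) : xmat n i t * xmat n i s = xmat n i (t + s) := by
  unfold xmat
  split_ifs with h
  · rw [Matrix.add_mul, Matrix.mul_add, Matrix.mul_add, Matrix.one_mul, Matrix.mul_one,
      Matrix.one_mul]
    have hz : Matrix.single (⟨i, by omega⟩ : Fin (n+1)) (⟨i+1, by omega⟩ : Fin (n+1)) t *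
        Matrix.single (⟨i, by omega⟩ : Fin (n+1)) (⟨i+1, by omega⟩ : Fin (n+1)) s = 0 := by
      apply Matrix.single_mul_single_of_ne
      simp [Fin.ext_iff]
    rw [hz, add_zero, Matrix.single_add]
    abel
  · rw [Matrix.one_mul]

lemma xmat_apply_of_ne (a : ℕ) (ha : a < n) (t : ℂ) (p q : Fin (n+1)) (hpq : p ≠ q) :
    xmat n a t p q
      = if p = (⟨a, by omega⟩ : Fin (n+1)) ∧ q = (⟨a+1, by omega⟩ : Fin (n+1)) then t else 0 := by
  rw [xmat_of_lt a ha, Matrix.add_apply, Matrix.one_apply_ne hpq]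
  unfold Matrix.single
  simp only [Matrix.of_apply, zero_add]
  congr 1
  rw [eq_iff_iff]
  constructor
  · rintro ⟨h1, h2⟩; exact ⟨h1.symm, h2.symm⟩
  · rintro ⟨h1, h2⟩; exact ⟨h1.symm, h2.symm⟩

lemma xmat_apply_diag (a : ℕ) (t : ℂ) (p : Fin (n+1)) : xmat n a t p p = 1 := by
  exact (upperUni_xmat a t).1 p

/-- decomposition `u = x_a(t) * u''` with `u''` upper and `(a,a+1)` entry `0`. -/
lemma decomp_upper (a : ℕ) (ha : a < n) (u : Matrix (Fin (n+1)) (Fin (n+1)) ℂ)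
    (hu : UpperUni u) :
    ∃ t u', UpperUni u' ∧ u' ⟨a, by omega⟩ ⟨a+1, by omega⟩ = 0 ∧ u = xmat n a t * u' := by
  set t := u ⟨a, by omega⟩ ⟨a+1, by omega⟩ with ht
  refine ⟨t, xmat n a (-t) * u, (upperUni_xmat a (-t)).mul hu, ?_, ?_⟩
  · rw [xmat_mul_apply a ha]
    rw [if_pos rfl]
    rw [(hu.1 _ : u ⟨a+1, by omega⟩ ⟨a+1, by omega⟩ = 1)]
    simp [ht]
  · rw [← Matrix.mul_assoc, xmat_mul_xmat]
    rw [show t + -t = 0 by ring, xmat_zero, Matrix.one_mul]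

/-- pushing `x_a(t)` through a signed permutation matrix from the right to the left. -/
lemma push_xmat (a : ℕ) (ha : a < n) (t : ℂ) (σ : Equiv.Perm (Fin (n+1))) (d : Fin (n+1) → ℂ)
    (hd : ∀ l, d l ≠ 0)
    (hσ : σ ⟨a, by omega⟩ < σ ⟨a+1, by omega⟩) :
    ∃ X, UpperUni X ∧ X * spMat σ d = spMat σ d * xmat n a t := by
  refine ⟨spConjL σ d (xmat n a t), ?_, spConjL_mul σ d hd _⟩
  apply upperUni_spConjL σ d hd _ (xmat_apply_diag a t)
  intro k m hmk
  have hne : σ⁻¹ k ≠ σ⁻¹ m := fun hc => (ne_of_gt hmk) (by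
    have := congrArg σ hc
    simpa using this)
  rw [xmat_apply_of_ne a ha t _ _ hne]
  rw [if_neg]
  rintro ⟨h1, h2⟩
  have hk : k = σ ⟨a, by omega⟩ := by
    rw [← h1]; simp
  have hm : m = σ ⟨a+1, by omega⟩ := by
    rw [← h2]; simp
  rw [hk, hm] at hmk
  exact absurd hσ (not_lt.mpr (le_of_lt hmk))

/-- conjugating an upper unitriangular matrix with vanishing `(a,a+1)` entry by `s̄_a`. -/
lemma sbar_conj_upper (a : ℕ) (ha : a < n) (u : Matrix (Fin (n+1)) (Fin (n+1)) ℂ)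
    (hu : UpperUni u) (h0 : u ⟨a, by omega⟩ ⟨a+1, by omega⟩ = 0) :
    ∃ u', UpperUni u' ∧ u * sbar n a = sbar n a * u' := by
  set σ := sperm n a with hσ
  set d := sbarSign (n := n) a with hdd
  have hd : ∀ l, d l ≠ 0 := sbarSign_ne_zero a
  set d' : Fin (n+1) → ℂ := fun l => (d (σ⁻¹ l))⁻¹ with hd'
  have hd'0 : ∀ l, d' l ≠ 0 := fun l => inv_ne_zero (hd _)
  have hMM' : spMat σ d * spMat σ⁻¹ d' = 1 := spMat_mul_inv σ d hd
  have hM'M : spMat σ⁻¹ d' * spMat σ d = 1 := spMat_inv_mul σ d hd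
  have h1 : spConjL σ⁻¹ d' u * spMat σ⁻¹ d' = spMat σ⁻¹ d' * u := spConjL_mul σ⁻¹ d' hd'0 u
  refine ⟨spConjL σ⁻¹ d' u, ?_, ?_⟩
  · -- upper unitriangularity
    apply upperUni_spConjL σ⁻¹ d' hd'0 u hu.1
    intro k m hmk
    simp only [inv_inv]
    -- u (σ k) (σ m) = 0 for m < k
    rcases lt_trichotomy (σ k) (σ m) with hc | hc | hc
    · -- only possible if (m,k) = (a, a+1)
      have hswap : σ = Equiv.swap ⟨a, by omega⟩ ⟨a+1, by omega⟩ := by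
        rw [hσ, sperm, dif_pos ha]
      by_cases hmk2 : m = (⟨a, by omega⟩ : Fin (n+1)) ∧ k = (⟨a+1, by omega⟩ : Fin (n+1))
      · obtain ⟨hm', hk'⟩ := hmk2
        rw [hm', hk', hswap]
        rw [Equiv.swap_apply_left, Equiv.swap_apply_right]
        exact h0
      · exfalso
        have := swap_adj_lt (x := ⟨a, by omega⟩) (y := ⟨a+1, by omega⟩) rfl hmk hmk2
        rw [← hswap] at this
        exact absurd hc (not_lt.mpr (le_of_lt this))
    · exact absurd (σ.injective hc) (ne_of_gt hmk)
    · exact hu.2 hc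
  · -- u * sbar = sbar * u'
    rw [sbar_eq a ha, ← hσ, ← hdd]
    calc u * spMat σ d
        = (spMat σ d * spMat σ⁻¹ d') * u * spMat σ d := by rw [hMM', Matrix.one_mul]
      _ = spMat σ d * (spMat σ⁻¹ d' * u) * spMat σ d := by
          simp only [Matrix.mul_assoc]
      _ = spMat σ d * (spConjL σ⁻¹ d' u * spMat σ⁻¹ d') * spMat σ d := by rw [h1]
      _ = spMat σ d * spConjL σ⁻¹ d' u * (spMat σ⁻¹ d' * spMat σ d) := by
          simp only [Matrix.mul_assoc]
      _ = spMat σ d * spConjL σ⁻¹ d' u := by rw [hM'M, Matrix.mul_one]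

lemma factor_y (a : ℕ) (ha : a < n) (c : ℂ) (hc : c ≠ 0) :
    ymat n a c * avmat n a c⁻¹ = xmat n a c⁻¹ * sbar n a * xmat n a c := by
  ext k l
  rw [avmat, Matrix.mul_diagonal]
  rw [mul_xmat_apply a ha]
  rw [xmat_mul_apply a ha, xmat_mul_apply a ha]
  rw [ymat_of_lt a ha, Matrix.add_apply, Matrix.one_apply]
  rw [sbar_eq a ha]
  simp only [spMat_apply]
  unfold Matrix.single sperm sbarSign
  rw [dif_pos ha]
  simp only [Matrix.of_apply, Equiv.swap_apply_def, Fin.ext_iff]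
  have hv1 : ((⟨a, by omega⟩ : Fin (n+1)) : ℕ) = a := rfl
  have hv2 : ((⟨a+1, by omega⟩ : Fin (n+1)) : ℕ) = a + 1 := rfl
  have hcc : c⁻¹ * c = 1 := inv_mul_cancel₀ hc
  have hcc' : c * c⁻¹ = 1 := mul_inv_cancel₀ hc
  split_ifs <;>
    first
      | (exfalso; omega)
      | (exact hcc')
      | (exact hcc)
      | (norm_num; done)
      | (rw [hcc]; norm_num; done)
      | (rw [hcc']; norm_num; done)
      | (field_simp; done)
      | (simp [hc]; done)
      | (simp only [inv_inv]; ring)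

/-! ### the Bruhat decomposition of `Θ` -/

lemma theta_decomp (l : List (ℕ × ℂ)) (hall : ∀ p ∈ l, p.1 < n ∧ p.2 ≠ 0)
    (hgood : ∀ l₁ p l₂, l = l₁ ++ p :: l₂ → ∀ (h : p.1 < n),
      wordPerm n (l₁.map Prod.fst) ⟨p.1, by omega⟩
        < wordPerm n (l₁.map Prod.fst) ⟨p.1 + 1, by omega⟩) :
    ∃ nL nR, UpperUni nL ∧ UpperUni nR ∧
      thetaL n l = nL * wbarL n (l.map Prod.fst) * nR := by
  induction l using List.reverseRecOn with
  | nil =>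
      refine ⟨1, 1, upperUni_one, upperUni_one, ?_⟩
      show thetaL n [] = 1 * wbarL n [] * 1
      rw [wbarL_nil]
      simp [thetaL]
  | append_singleton l' p ih =>
      have hall' : ∀ q ∈ l', q.1 < n ∧ q.2 ≠ 0 :=
        fun q hq => hall q (List.mem_append_left _ hq)
      have hgood' : ∀ l₁ q l₂, l' = l₁ ++ q :: l₂ → ∀ (h : q.1 < n),
          wordPerm n (l₁.map Prod.fst) ⟨q.1, by omega⟩
            < wordPerm n (l₁.map Prod.fst) ⟨q.1 + 1, by omega⟩ := by
        intro l₁ q l₂ hsplit h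
        exact hgood l₁ q (l₂ ++ [p]) (by rw [hsplit]; simp) h
      obtain ⟨nL, nR, hnL, hnR, hθ⟩ := ih hall' hgood'
      obtain ⟨ha, hc⟩ := hall p (List.mem_append_right _ (List.mem_singleton_self p))
      obtain ⟨d, hd, hW⟩ := wbar_spMat (l'.map Prod.fst)
        (by
          intro b hb
          rw [List.mem_map] at hb
          obtain ⟨q, hq, hqb⟩ := hb
          rw [← hqb]
          exact (hall' q hq).1)
      have hσlt := hgood l' p [] rfl ha
      -- decompose
      set a := p.1
      set c := p.2
      set W := wbarL n (l'.map Prod.fst) with hWdef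
      obtain ⟨t, u'', hu'', h0, hdecu⟩ :=
        decomp_upper a ha (nR * xmat n a c⁻¹) (hnR.mul (upperUni_xmat a c⁻¹))
      obtain ⟨X, hX, hXW⟩ := push_xmat a ha t (wordPerm n (l'.map Prod.fst)) d hd hσlt
      rw [← hW] at hXW
      obtain ⟨u''', hu''', hsbarconj⟩ := sbar_conj_upper a ha u'' hu'' h0
      refine ⟨nL * X, u''' * xmat n a c, hnL.mul hX, hu'''.mul (upperUni_xmat a c), ?_⟩
      have hfact : ymat n a c * avmat n a c⁻¹ = xmat n a c⁻¹ * sbar n a * xmat n a c :=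
        factor_y a ha c hc
      calc thetaL n (l' ++ [p])
          = thetaL n l' * (ymat n a c * avmat n a c⁻¹) := by
            rw [thetaL_append, thetaL_singleton]
        _ = (nL * W * nR) * (xmat n a c⁻¹ * sbar n a * xmat n a c) := by rw [hθ, hfact]
        _ = nL * W * (nR * xmat n a c⁻¹) * sbar n a * xmat n a c := by
            simp only [Matrix.mul_assoc]
        _ = nL * W * (xmat n a t * u'') * sbar n a * xmat n a c := by rw [← hdecu]
        _ = nL * (W * xmat n a t) * (u'' * sbar n a) * xmat n a c := by
            simp only [Matrix.mul_assoc]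
        _ = nL * (X * W) * (sbar n a * u''') * xmat n a c := by rw [hXW, hsbarconj]
        _ = (nL * X) * (W * sbar n a) * (u''' * xmat n a c) := by
            simp only [Matrix.mul_assoc]
        _ = (nL * X) * wbarL n ((l' ++ [p]).map Prod.fst) * (u''' * xmat n a c) := by
            rw [List.map_append, wbarL_append]
            simp [wbarL_singleton]
            rfl

/-! ### Lemma A : all principal minors of `w̄⁻¹Θ` equal 1 -/

lemma ulMinor_wbar_inv_theta (l : List (ℕ × ℂ)) (hall : ∀ p ∈ l, p.1 < n ∧ p.2 ≠ 0)
    (hgood : ∀ l₁ p l₂, l = l₁ ++ p :: l₂ → ∀ (h : p.1 < n),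
      wordPerm n (l₁.map Prod.fst) ⟨p.1, by omega⟩
        < wordPerm n (l₁.map Prod.fst) ⟨p.1 + 1, by omega⟩)
    (hprod : wordPerm n (l.map Prod.fst) = (Fin.revPerm : Equiv.Perm (Fin (n+1))))
    (j : ℕ) (hj : j ≤ n + 1) :
    ulMinor ((wbarL n (l.map Prod.fst))⁻¹ * thetaL n l) j = 1 := by
  obtain ⟨nL, nR, hnL, hnR, hθ⟩ := theta_decomp l hall hgood
  obtain ⟨d, hd, hW⟩ := wbar_spMat (l.map Prod.fst)
    (by
      intro b hb
      rw [List.mem_map] at hb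
      obtain ⟨q, hq, hqb⟩ := hb
      rw [← hqb]
      exact (hall q hq).1)
  rw [hprod] at hW
  set σ : Equiv.Perm (Fin (n+1)) := (Fin.revPerm : Equiv.Perm (Fin (n+1))) with hσdef
  set d' : Fin (n+1) → ℂ := fun l => (d (σ⁻¹ l))⁻¹ with hd'
  have hd'0 : ∀ k, d' k ≠ 0 := fun k => inv_ne_zero (hd _)
  set W := wbarL n (l.map Prod.fst) with hWdef
  have hWinv : W⁻¹ = spMat σ⁻¹ d' := by
    apply Matrix.inv_eq_left_inv
    rw [hW]
    exact spMat_inv_mul σ d hd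
  have hM'M : spMat σ⁻¹ d' * W = 1 := by
    rw [hW]
    exact spMat_inv_mul σ d hd
  set V := spConjL σ⁻¹ d' nL with hV
  have hVW : V * spMat σ⁻¹ d' = spMat σ⁻¹ d' * nL := spConjL_mul σ⁻¹ d' hd'0 nL
  have hVlow : LowerUni V := by
    apply lowerUni_spConjL σ⁻¹ d' hd'0 nL hnL.1
    intro k m hkm
    simp only [inv_inv]
    apply hnL.2
    show σ m < σ k
    rw [hσdef]
    simp only [Fin.revPerm_apply]
    rw [Fin.rev_lt_rev]
    exact hkm
  have hkey : W⁻¹ * thetaL n l = V * nR := by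
    rw [hθ, hWinv]
    calc spMat σ⁻¹ d' * (nL * W * nR)
        = (spMat σ⁻¹ d' * nL) * (W * nR) := by simp only [Matrix.mul_assoc]
      _ = (V * spMat σ⁻¹ d') * (W * nR) := by rw [hVW]
      _ = V * (spMat σ⁻¹ d' * W) * nR := by simp only [Matrix.mul_assoc]
      _ = V * nR := by rw [hM'M, Matrix.mul_one]
  rw [hkey, ulMinor_mul_lowerUni hVlow]
  rw [ulMinor_upperUni hnR, if_pos hj]

/-! ### final bridging lemmas -/

lemma mul_spMat_apply (M : Matrix (Fin (n+1)) (Fin (n+1)) ℂ) (σ : Equiv.Perm (Fin (n+1)))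
    (d : Fin (n+1) → ℂ) (k l : Fin (n+1)) :
    (M * spMat σ d) k l = M k (σ l) * d l := by
  rw [Matrix.mul_apply]
  rw [Finset.sum_eq_single (σ l)]
  · rw [spMat_apply, if_pos rfl]
  · intro p _ hp
    rw [spMat_apply, if_neg (fun hh => hp hh), mul_zero]
  · simp

/-- `x_j(b) s̄_j = s̄_j y_j(-b)` -/
lemma xmat_sbar_same (j : ℕ) (hj : j < n) (b : ℂ) :
    xmat n j b * sbar n j = sbar n j * ymat n j (-b) := by
  ext k l
  rw [xmat_mul_apply j hj, mul_ymat_apply j hj]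
  rw [sbar_eq j hj]
  simp only [spMat_apply]
  unfold sperm sbarSign
  rw [dif_pos hj]
  simp only [Equiv.swap_apply_def, Fin.ext_iff]
  have hv1 : ((⟨j, by omega⟩ : Fin (n+1)) : ℕ) = j := rfl
  have hv2 : ((⟨j+1, by omega⟩ : Fin (n+1)) : ℕ) = j + 1 := rfl
  split_ifs <;>
    first
      | (exfalso; omega)
      | (norm_num; done)
      | (ring_nf)

/-- the column-expansion identity for the twisted minor -/
lemma ulMinor_mul_ymat_sbar (M : Matrix (Fin (n+1)) (Fin (n+1)) ℂ) (j : ℕ) (hj : j < n)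
    (s : ℂ) :
    ulMinor (M * sbar n j * ymat n j s) (j+1)
      = ulMinor (M * sbar n j) (j+1) - s * ulMinor M (j+1) := by
  have h1 : j + 1 ≤ n + 1 := by omega
  set x : Fin (n+1) := ⟨j, by omega⟩ with hx
  set y : Fin (n+1) := ⟨j+1, by omega⟩ with hy
  set cst : Fin (j+1) → Fin (n+1) := Fin.castLE h1 with hcst
  set jF : Fin (j+1) := ⟨j, by omega⟩ with hjF
  have hcjF : cst jF = x := rfl
  set A := M * sbar n j with hA
  set B := A.submatrix cst cst with hB
  -- the block of A * ymat is an updateCol of B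
  have hblock : (A * ymat n j s).submatrix cst cst
      = B.updateCol jF (fun k => B k jF + A (cst k) y * s) := by
    ext k l
    rw [Matrix.submatrix_apply, mul_ymat_apply j hj, Matrix.updateCol_apply]
    by_cases hl : l = jF
    · subst hl
      rw [if_pos rfl]
      rw [if_pos (show cst jF = (⟨j, by omega⟩ : Fin (n+1)) from Fin.ext rfl)]
      rfl
    · rw [if_neg hl, if_neg]
      · rw [add_zero]
        rfl
      · intro hcontra
        apply hl
        rw [Fin.ext_iff] at hcontra ⊢
        exact hcontra
  -- column y of A is minus column x of M
  have hcoly : ∀ p, A p y = - M p x := by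
    intro p
    rw [hA, sbar_eq j hj, mul_spMat_apply]
    have h2 : (sperm n j) y = x := by
      rw [sperm, dif_pos hj]
      exact Equiv.swap_apply_right x y
    rw [h2]
    unfold sbarSign
    rw [if_pos (by rw [hy])]
    ring
  -- the matrix with column jF replaced by column x of M is the block of M
  have hsub : B.updateCol jF (fun k => M (cst k) x) = M.submatrix cst cst := by
    ext k l
    rw [Matrix.updateCol_apply]
    by_cases hl : l = jF
    · subst hl
      rw [if_pos rfl]
      rfl
    · rw [if_neg hl]
      rw [hB, Matrix.submatrix_apply, Matrix.submatrix_apply, hA]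
      rw [sbar_eq j hj, mul_spMat_apply]
      have hlj : (cst l : ℕ) < j := by
        have := l.isLt
        have hne : (l : ℕ) ≠ j := by
          intro hcontra
          exact hl (Fin.ext hcontra)
        simp only [hcst, Fin.coe_castLE]
        omega
      have h3 : (sperm n j) (cst l) = cst l := by
        rw [sperm, dif_pos hj]
        apply Equiv.swap_apply_of_ne_of_ne
        · intro hcontra
          rw [hcontra] at hlj
          simp [hx] at hlj
        · intro hcontra
          rw [hcontra] at hlj
          simp only [hy] at hlj
          omega
      rw [h3]
      unfold sbarSign
      rw [if_neg (by omega)]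
      ring
  unfold ulMinor
  rw [dif_pos h1, dif_pos h1, dif_pos h1]
  rw [← hB]
  rw [hblock]
  have hsum : (fun k => B k jF + A (cst k) y * s)
      = (fun k => B k jF) + (fun k => A (cst k) y * s) := rfl
  rw [hsum, Matrix.det_updateCol_add]
  rw [Matrix.updateCol_eq_self]
  have hsmul : (fun k => A (cst k) y * s) = (-s) • (fun k => M (cst k) x) := by
    funext k
    rw [hcoly]
    simp
    ring
  rw [hsmul, Matrix.det_updateCol_smul, hsub]
  ring


/-- The geometric crystal operator `e_i^α` changes the minors
`Δ_{w₀Λ_j, s_jΛ_j}` by `δ_{ij}(α⁻¹−1)ε_i(g)`, fixes the principal minors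
`Δ_{w₀Λ_j, Λ_j}` (which equal `1`), and hence
`Φ⁺(e_i^α(g)) = Φ⁺(g) + (α⁻¹−1)ε_i(g)`. -/
theorem half_potential_transformation {n N : ℕ} (ι : Fin N → ℕ) (hlt : ∀ m, ι m < n)
    (hlen : N = n * (n + 1) / 2)
    (hw0 : (List.ofFn (fun m => sperm n (ι m))).prod = (Fin.revPerm : Equiv.Perm (Fin (n+1))))
    (c : Fin N → ℂ) (hc : ∀ m, c m ≠ 0) (i : Fin n) (α : ℂ) (hα : α ≠ 0)
    (hg : theta n ι c i.succ i.castSucc ≠ 0) :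
    let g := theta n ι c
    let εi : ℂ := g i.succ i.succ / g i.succ i.castSucc
    let φi : ℂ := (g i.castSucc i.castSucc / g i.succ i.succ) * εi
    let eg := xmat n (i : ℕ) ((α - 1) * φi) * g * xmat n (i : ℕ) ((α⁻¹ - 1) * εi)
    (∀ j : Fin n,
      ulMinor ((wbar n ι)⁻¹ * eg * sbar n (j : ℕ)) ((j : ℕ) + 1)
          = ulMinor ((wbar n ι)⁻¹ * g * sbar n (j : ℕ)) ((j : ℕ) + 1)
            + (if i = j then (α⁻¹ - 1) * εi else 0) ∧
      ulMinor ((wbar n ι)⁻¹ * eg) ((j : ℕ) + 1) = ulMinor ((wbar n ι)⁻¹ * g) ((j : ℕ) + 1) ∧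
      ulMinor ((wbar n ι)⁻¹ * g) ((j : ℕ) + 1) = 1) ∧
    (∑ j : Fin n, ulMinor ((wbar n ι)⁻¹ * eg * sbar n (j : ℕ)) ((j : ℕ) + 1))
      = (∑ j : Fin n, ulMinor ((wbar n ι)⁻¹ * g * sbar n (j : ℕ)) ((j : ℕ) + 1))
        + (α⁻¹ - 1) * εi := by
  intro g εi φi eg
  set b : ℂ := (α⁻¹ - 1) * εi with hb
  set aL : ℂ := (α - 1) * φi with haL
  -- the word as a list of pairs
  set l : List (ℕ × ℂ) := List.ofFn (fun m => (ι m, c m)) with hldef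
  have hmapfst : l.map Prod.fst = List.ofFn ι := by
    rw [hldef, List.map_ofFn]
    rfl
  have hthetaL : thetaL n l = g := by
    show thetaL n l = theta n ι c
    rw [hldef]
    unfold thetaL theta
    rw [List.map_ofFn]
    rfl
  have hwbarL : wbarL n (l.map Prod.fst) = wbar n ι := by
    rw [hmapfst]
    unfold wbarL wbar
    rw [List.map_ofFn]
    rfl
  have hwordPerm : wordPerm n (l.map Prod.fst) = (Fin.revPerm : Equiv.Perm (Fin (n+1))) := by
    rw [hmapfst]
    unfold wordPerm
    rw [List.map_ofFn]
    exact hw0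
  have hall : ∀ p ∈ l, p.1 < n ∧ p.2 ≠ 0 := by
    intro p hp
    rw [hldef, List.mem_ofFn] at hp
    obtain ⟨m, hm⟩ := hp
    rw [← hm]
    exact ⟨hlt m, hc m⟩
  have hgood : ∀ l₁ p l₂, l = l₁ ++ p :: l₂ → ∀ (h : p.1 < n),
      wordPerm n (l₁.map Prod.fst) ⟨p.1, by omega⟩
        < wordPerm n (l₁.map Prod.fst) ⟨p.1 + 1, by omega⟩ := by
    intro l₁ p l₂ hsplit h
    refine prefix_lt (List.ofFn ι) ?_ ?_ ?_ (l₁.map Prod.fst) p.1 (l₂.map Prod.fst) ?_ h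
    · intro a ha
      rw [List.mem_ofFn] at ha
      obtain ⟨m, hm⟩ := ha
      rw [← hm]
      exact hlt m
    · rw [List.length_ofFn]
      exact hlen
    · show wordPerm n (List.ofFn ι) = _
      rw [← hmapfst]
      exact hwordPerm
    · rw [← hmapfst, hsplit, List.map_append, List.map_cons]
  -- Lemma A : the principal minors of w̄⁻¹ g are all 1
  have hA : ∀ j : ℕ, j ≤ n + 1 → ulMinor ((wbar n ι)⁻¹ * g) j = 1 := by
    intro j hj
    have := ulMinor_wbar_inv_theta l hall hgood hwordPerm j hj
    rwa [hwbarL, hthetaL] at this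
  -- the signed permutation form of w̄
  obtain ⟨d, hd, hW⟩ := wbar_spMat (l.map Prod.fst)
    (by
      intro a ha
      rw [List.mem_map] at ha
      obtain ⟨q, hq, hqa⟩ := ha
      rw [← hqa]
      exact (hall q hq).1)
  rw [hwordPerm, hwbarL] at hW
  set σ : Equiv.Perm (Fin (n+1)) := (Fin.revPerm : Equiv.Perm (Fin (n+1))) with hσdef
  set d' : Fin (n+1) → ℂ := fun k => (d (σ⁻¹ k))⁻¹ with hd'
  have hd'0 : ∀ k, d' k ≠ 0 := fun k => inv_ne_zero (hd _)
  have hWinv : (wbar n ι)⁻¹ = spMat σ⁻¹ d' := by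
    apply Matrix.inv_eq_left_inv
    rw [hW]
    exact spMat_inv_mul σ d hd
  -- conjugating x_i(aL) through w̄⁻¹ gives a lower unitriangular matrix
  set L0 := spConjL σ⁻¹ d' (xmat n (i:ℕ) aL) with hL0
  have hL0low : LowerUni L0 := by
    apply lowerUni_spConjL σ⁻¹ d' hd'0 _ (xmat_apply_diag _ _)
    intro k m hkm
    simp only [inv_inv]
    apply (upperUni_xmat (n := n) (i:ℕ) aL).2
    show σ m < σ k
    rw [hσdef]
    simp only [Fin.revPerm_apply]
    rw [Fin.rev_lt_rev]
    exact hkm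
  have hL0comm : L0 * (wbar n ι)⁻¹ = (wbar n ι)⁻¹ * xmat n (i:ℕ) aL := by
    rw [hWinv, hL0]
    exact spConjL_mul σ⁻¹ d' hd'0 _
  have hin : (i:ℕ) < n := i.isLt
  -- the first and second bullet per j
  have hmain : ∀ j : Fin n,
      ulMinor ((wbar n ι)⁻¹ * eg * sbar n (j : ℕ)) ((j : ℕ) + 1)
          = ulMinor ((wbar n ι)⁻¹ * g * sbar n (j : ℕ)) ((j : ℕ) + 1)
            + (if i = j then b else 0) ∧
      ulMinor ((wbar n ι)⁻¹ * eg) ((j : ℕ) + 1) = ulMinor ((wbar n ι)⁻¹ * g) ((j : ℕ) + 1) := by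
    intro j
    have hjn : (j:ℕ) < n := j.isLt
    have hegL : ∀ Z : Matrix (Fin (n+1)) (Fin (n+1)) ℂ,
        (wbar n ι)⁻¹ * eg * Z = L0 * ((wbar n ι)⁻¹ * g * xmat n (i:ℕ) b * Z) := by
      intro Z
      show (wbar n ι)⁻¹ * (xmat n (i:ℕ) aL * g * xmat n (i:ℕ) b) * Z = _
      calc (wbar n ι)⁻¹ * (xmat n (i:ℕ) aL * g * xmat n (i:ℕ) b) * Z
          = ((wbar n ι)⁻¹ * xmat n (i:ℕ) aL) * (g * xmat n (i:ℕ) b * Z) := by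
            simp only [Matrix.mul_assoc]
        _ = (L0 * (wbar n ι)⁻¹) * (g * xmat n (i:ℕ) b * Z) := by rw [hL0comm]
        _ = L0 * ((wbar n ι)⁻¹ * g * xmat n (i:ℕ) b * Z) := by
            simp only [Matrix.mul_assoc]
    have hegL1 : (wbar n ι)⁻¹ * eg = L0 * ((wbar n ι)⁻¹ * g * xmat n (i:ℕ) b) := by
      have := hegL 1
      rw [Matrix.mul_one] at this
      rw [this, Matrix.mul_one]
    constructor
    · -- first bullet
      rw [hegL (sbar n (j:ℕ)), ulMinor_mul_lowerUni hL0low]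
      by_cases hij : i = j
      · -- i = j : the minor changes by b
        subst hij
        rw [if_pos rfl]
        have hstep : (wbar n ι)⁻¹ * g * xmat n (i:ℕ) b * sbar n (i:ℕ)
            = (wbar n ι)⁻¹ * g * sbar n (i:ℕ) * ymat n (i:ℕ) (-b) := by
          rw [Matrix.mul_assoc ((wbar n ι)⁻¹ * g), xmat_sbar_same (i:ℕ) hin b,
            ← Matrix.mul_assoc]
        rw [hstep, ulMinor_mul_ymat_sbar _ (i:ℕ) hin (-b)]
        rw [hA ((i:ℕ)+1) (by omega)]
        ring
      · -- i ≠ j : the minor is unchanged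
        rw [if_neg hij, add_zero]
        have hijn : (i:ℕ) ≠ (j:ℕ) := fun hcontra => hij (Fin.ext hcontra)
        have h0 : xmat n (i:ℕ) b ⟨(j:ℕ), by omega⟩ ⟨(j:ℕ)+1, by omega⟩ = 0 := by
          rw [xmat_apply_of_ne (i:ℕ) hin b _ _ (by simp [Fin.ext_iff])]
          rw [if_neg]
          rintro ⟨h1, h2⟩
          rw [Fin.ext_iff] at h1
          simp at h1
          exact hijn h1.symm
        obtain ⟨U, hU, hcomm⟩ :=
          sbar_conj_upper (j:ℕ) hjn (xmat n (i:ℕ) b) (upperUni_xmat _ _) h0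
        have hstep : (wbar n ι)⁻¹ * g * xmat n (i:ℕ) b * sbar n (j:ℕ)
            = (wbar n ι)⁻¹ * g * sbar n (j:ℕ) * U := by
          rw [Matrix.mul_assoc ((wbar n ι)⁻¹ * g), hcomm, ← Matrix.mul_assoc]
        rw [hstep, ulMinor_mul_upperUni hU]
    · -- second bullet
      rw [hegL1, ulMinor_mul_lowerUni hL0low, ulMinor_mul_upperUni (upperUni_xmat _ _)]
  refine ⟨fun j => ⟨(hmain j).1, (hmain j).2, hA ((j:ℕ)+1) (by omega)⟩, ?_⟩
  have hsum : ∀ j : Fin n, ulMinor ((wbar n ι)⁻¹ * eg * sbar n (j : ℕ)) ((j : ℕ) + 1)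
      = ulMinor ((wbar n ι)⁻¹ * g * sbar n (j : ℕ)) ((j : ℕ) + 1) + (if i = j then b else 0) :=
    fun j => (hmain j).1
  rw [Finset.sum_congr rfl (fun j _ => hsum j), Finset.sum_add_distrib]
  congr 1
  rw [Finset.sum_ite_eq]
  simp
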